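/- For every ordinal α, for every t ∈ (0,1] the intersection X_α ∩ L_t is nonempty, and for every t ∈ [0,1) the intersection X_α ∩ R_t is nonempty. -/

import Mathlib

open Set Topology Filter

noncomputable section

/-- A set is an `Fσ` set if it is a countable union of closed sets. -/
def IsFSigma {X : Type*} [TopologicalSpace X] (s : Set X) : Prop :=
  ∃ F : ℕ → Set X, (∀ n, IsClosed (F n)) ∧ s = ⋃ n, F n

/-- A topological space is an `F`-space if any two disjoint open `Fσ` subsets
have disjoint closures. -/
def IsFSpace (X : Type*) [TopologicalSpace X] : Prop :=
  ∀ s t : Set X, IsOpen s → IsOpen t → IsFSigma s → IsFSigma t → Disjoint s t →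
    Disjoint (closure s) (closure t)

/-- `𝐒 = ℕ × [0,1]²` where `ℕ` is discrete and `[0,1]` is the unit interval. -/
abbrev bS : Type := ℕ × (unitInterval × unitInterval)

/-- `βπ : β𝐒 → βℕ`, the Stone–Čech extension of the projection `π(n,x,y) = n`. -/
def betaPi : StoneCech bS → StoneCech ℕ :=
  stoneCechExtend (continuous_stoneCechUnit.comp continuous_fst)

/-- `βf : β𝐒 → [0,1]`, the Stone–Čech extension of `f(n,x,y) = x`. -/
def betaF : StoneCech bS → unitInterval :=
  stoneCechExtend (continuous_fst.comp continuous_snd)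

/-- `S_u = βπ⁻¹(u)`, as a subset of `β𝐒` (carrying the subspace topology). -/
def Su (u : StoneCech ℕ) : Set (StoneCech bS) := betaPi ⁻¹' {u}

/-- `f_u : S_u → [0,1]`, the restriction of `βf` to `S_u`. -/
def fu (u : StoneCech ℕ) : (Su u) → unitInterval := fun z => betaF z.1

/-- `L_t = f_u⁻¹(t) ∩ cl_{S_u} f_u⁻¹([0,t))`. -/
def Lset (u : StoneCech ℕ) (t : unitInterval) : Set (Su u) :=
  fu u ⁻¹' {t} ∩ closure (fu u ⁻¹' (Set.Ico 0 t))

/-- `R_t = f_u⁻¹(t) ∩ cl_{S_u} f_u⁻¹((t,1])`. -/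
def Rset (u : StoneCech ℕ) (t : unitInterval) : Set (Su u) :=
  fu u ⁻¹' {t} ∩ closure (fu u ⁻¹' (Set.Ioc t 1))

/-- The rectangle `P_{s,r} = S_u ∩ cl_{β𝐒}(ℕ × [s,r] × I)`, viewed as a subset of `S_u`. -/
def Pset (u : StoneCech ℕ) (s r : unitInterval) : Set (Su u) :=
  Subtype.val ⁻¹' closure (stoneCechUnit '' {p : bS | p.2.1 ∈ Set.Icc s r})

/-- `L_{s,t} = cl_{S_u}(⋃_{s<r<t} P_{s,r})`. -/
def Lst (u : StoneCech ℕ) (s t : unitInterval) : Set (Su u) :=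
  closure (⋃ r ∈ Set.Ioo s t, Pset u s r)

/-- The interior of `B` in the subspace `A`, viewed as a subset of the ambient space. -/
def relInt {Y : Type*} [TopologicalSpace Y] (A B : Set Y) : Set Y :=
  Subtype.val '' interior ((Subtype.val : A → Y) ⁻¹' B)

/-- The transfinite sequence `X_α ⊆ S_u`: `X_0 = S_u`,
`X_{α+1} = X_α \ ⋃_{t} Int_{X_α}(X_α ∩ f_u⁻¹(t))`, and `X_λ = ⋂_{β<λ} X_β` at limits. -/
def Xseq (u : StoneCech ℕ) : Ordinal → Set (Su u) := fun α =>
  Ordinal.limitRecOn α Set.univ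
    (fun _ Xa => Xa \ ⋃ t : unitInterval, relInt Xa (Xa ∩ fu u ⁻¹' {t}))
    (fun o _ ih => ⋂ (β : {β : Ordinal // β < o}), ih β.1 β.2)

/-- The bottom line `B_u = S_u ∩ cl_{β𝐒}(ℕ × I × {0})`, viewed as a subset of `S_u`. -/
def Bu (u : StoneCech ℕ) : Set (Su u) :=
  Subtype.val ⁻¹' closure (stoneCechUnit '' {p : bS | p.2.2 = 0})

/-- The top line `T_u = S_u ∩ cl_{β𝐒}(ℕ × I × {1})`, viewed as a subset of `S_u`. -/
def Tu (u : StoneCech ℕ) : Set (Su u) :=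
  Subtype.val ⁻¹' closure (stoneCechUnit '' {p : bS | p.2.2 = 1})

/-! ### Auxiliary lemmas -/

lemma continuous_betaF : Continuous betaF := continuous_stoneCechExtend _

lemma continuous_fu (u : StoneCech ℕ) : Continuous (fu u) :=
  continuous_betaF.comp continuous_subtype_val

lemma fu_mem_Icc {u : StoneCech ℕ} {s r : unitInterval} {x : Su u}
    (hx : x ∈ Pset u s r) : fu u x ∈ Icc s r := by
  have hmaps : MapsTo betaF (stoneCechUnit '' {p : bS | p.2.1 ∈ Set.Icc s r}) (Icc s r) := by
    rintro y ⟨p, hp, rfl⟩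
    have h : betaF (stoneCechUnit p) = p.2.1 :=
      congrFun (stoneCechExtend_extends (continuous_fst.comp continuous_snd)) p
    rw [h]; exact hp
  have h2 := map_mem_closure continuous_betaF hx hmaps
  rwa [isClosed_Icc.closure_eq] at h2

lemma isClosed_Lset (u : StoneCech ℕ) (t : unitInterval) : IsClosed (Lset u t) :=
  (isClosed_singleton.preimage (continuous_fu u)).inter isClosed_closure

lemma isClosed_Rset (u : StoneCech ℕ) (t : unitInterval) : IsClosed (Rset u t) :=
  (isClosed_singleton.preimage (continuous_fu u)).inter isClosed_closure

lemma Xseq_zero (u : StoneCech ℕ) : Xseq u 0 = Set.univ :=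
  Ordinal.limitRecOn_zero _ _ _

lemma Xseq_succ (u : StoneCech ℕ) (α : Ordinal) :
    Xseq u (α + 1) =
      Xseq u α \ ⋃ t : unitInterval, relInt (Xseq u α) (Xseq u α ∩ fu u ⁻¹' {t}) :=
  Ordinal.limitRecOn_add_one _ _ _ _

lemma Xseq_limit (u : StoneCech ℕ) {o : Ordinal} (h : Order.IsSuccLimit o) :
    Xseq u o = ⋂ (β : {β : Ordinal // β < o}), Xseq u β.1 :=
  Ordinal.limitRecOn_limit _ _ _ _ h

lemma isClosed_Xseq (u : StoneCech ℕ) (α : Ordinal) : IsClosed (Xseq u α) := by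
  induction α using Ordinal.limitRecOn with
  | zero => rw [Xseq_zero]; exact isClosed_univ
  | add_one α ih =>
      rw [Xseq_succ]
      have hrw : Xseq u α \ ⋃ t : unitInterval, relInt (Xseq u α) (Xseq u α ∩ fu u ⁻¹' {t})
          = Subtype.val ''
            ((⋃ t : unitInterval,
              interior ((Subtype.val : Xseq u α → Su u) ⁻¹' (Xseq u α ∩ fu u ⁻¹' {t})))ᶜ) := by
        rw [compl_eq_univ_diff, image_diff Subtype.val_injective, image_iUnion]
        congr 1
        · simp [Subtype.coe_image_univ]
      rw [hrw]
      exact ih.isClosedEmbedding_subtypeVal.isClosedMap _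
        (isOpen_iUnion (fun t => isOpen_interior)).isClosed_compl
  | limit o ho ih =>
      rw [Xseq_limit u ho]
      exact isClosed_iInter fun β => ih β.1 β.2

lemma Xseq_anti (u : StoneCech ℕ) {α β : Ordinal} (h : α ≤ β) : Xseq u β ⊆ Xseq u α := by
  induction β using Ordinal.limitRecOn with
  | zero =>
      rw [nonpos_iff_eq_zero] at h; subst h; exact subset_rfl
  | add_one γ ih =>
      rcases h.lt_or_eq with hlt | rfl
      · have hle : α ≤ γ := Order.lt_add_one_iff.mp hlt
        rw [Xseq_succ]
        exact diff_subset.trans (ih hle)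
      · exact subset_rfl
  | limit o ho ih =>
      rcases h.lt_or_eq with hlt | rfl
      · rw [Xseq_limit u ho]
        exact iInter_subset (fun β : {β : Ordinal // β < o} => Xseq u β.1) ⟨α, hlt⟩
      · exact subset_rfl

/-- Key cluster-point lemma. -/
lemma key (u : StoneCech ℕ) [CompactSpace (Su u)] {A : Set (Su u)} (hA : IsClosed A)
    {t : unitInterval} {s : Set unitInterval} (hs : ∀ y ∈ s, y ≠ t)
    {x : ℕ → Su u} (hxA : ∀ n, x n ∈ A) (hxs : ∀ n, fu u (x n) ∈ s)
    (hlim : Tendsto (fun n => fu u (x n)) atTop (𝓝 t)) :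
    ∃ z, z ∈ A ∧ fu u z = t ∧ z ∈ closure (fu u ⁻¹' s) ∧
      ∀ r : unitInterval, z ∉ relInt A (A ∩ fu u ⁻¹' {r}) := by
  have hmapne : (Filter.map x atTop).NeBot := map_neBot
  let F : Ultrafilter (Su u) := Ultrafilter.of (Filter.map x atTop)
  have hFle : (F : Filter (Su u)) ≤ Filter.map x atTop := Ultrafilter.of_le _
  set z := F.lim with hzdef
  have hz : (F : Filter (Su u)) ≤ 𝓝 z := F.le_nhds_lim
  have hrange : Set.range x ∈ F :=
    hFle (Filter.mem_map.mpr (Filter.univ_mem' fun n => Set.mem_range_self n))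
  have hclos : ∀ S : Set (Su u), (∀ n, x n ∈ S) → z ∈ closure S := by
    intro S hS
    have hSF : S ∈ F := hFle (Filter.mem_map.mpr (Filter.univ_mem' hS))
    have hcp : ClusterPt z (𝓟 S) :=
      Filter.neBot_of_le (le_inf hz (Filter.le_principal_iff.mpr hSF))
    exact mem_closure_iff_clusterPt.mpr hcp
  have hzA : z ∈ A := by
    have := hclos A hxA
    rwa [hA.closure_eq] at this
  have hfz : fu u z = t := by
    have h1 : Tendsto (fu u) (F : Filter (Su u)) (𝓝 (fu u z)) :=
      ((continuous_fu u).tendsto z).mono_left hz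
    have hlim' : Tendsto (fu u ∘ x) atTop (𝓝 t) := hlim
    have h2 : Tendsto (fu u) (F : Filter (Su u)) (𝓝 t) :=
      ((tendsto_map'_iff (g := x) (f := fu u)).mpr hlim').mono_left hFle
    exact tendsto_nhds_unique h1 h2
  refine ⟨z, hzA, hfz, hclos _ fun n => hxs n, ?_⟩
  intro r hr
  obtain ⟨w, hw, hwz⟩ := hr
  have hrt : r = t := by
    have hwmem := interior_subset hw
    have : fu u (w : Su u) = r := hwmem.2
    rw [hwz] at this
    rw [← this, hfz]
  subst hrt
  rw [mem_interior_iff_mem_nhds, nhds_induced, Filter.mem_comap] at hw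
  obtain ⟨U, hU, hUsub⟩ := hw
  rw [hwz] at hU
  have hUF : U ∈ F := hz hU
  obtain ⟨y, hyU, n, rfl⟩ := Filter.nonempty_of_mem (Filter.inter_mem hUF hrange)
  have : (⟨x n, hxA n⟩ : A) ∈ (Subtype.val : A → Su u) ⁻¹' U := hyU
  have hmem := hUsub this
  exact hs _ (hxs n) hmem.2

/-! ### The approximating sequences -/

lemma aux_tendsto : Tendsto (fun n : ℕ => 1 / ((n : ℝ) + 2)) atTop (𝓝 0) := by
  have h := (tendsto_one_div_add_atTop_nhds_zero_nat (𝕜 := ℝ)).comp (tendsto_add_atTop_nat 1)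
  convert h using 2 with n
  simp [Function.comp]; push_cast; ring

def aseq (t : unitInterval) (n : ℕ) : unitInterval :=
  ⟨(t : ℝ) * (((n : ℝ) + 1) / ((n : ℝ) + 2)), by
    constructor
    · exact mul_nonneg t.2.1 (by positivity)
    · calc (t : ℝ) * (((n : ℝ) + 1) / ((n : ℝ) + 2)) ≤ (t : ℝ) * 1 := by
            apply mul_le_mul_of_nonneg_left _ t.2.1
            rw [div_le_one (by positivity)]; linarith
          _ ≤ 1 := by rw [mul_one]; exact t.2.2⟩

lemma aseq_lt {t : unitInterval} (ht : 0 < t) (n : ℕ) : aseq t n < t := by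
  rw [← Subtype.coe_lt_coe]
  have ht' : (0 : ℝ) < t := ht
  show (t : ℝ) * (((n : ℝ) + 1) / ((n : ℝ) + 2)) < t
  nth_rewrite 2 [← mul_one (t : ℝ)]
  apply mul_lt_mul_of_pos_left _ ht'
  rw [div_lt_one (by positivity)]; linarith

lemma aseq_mono {t : unitInterval} (ht : 0 < t) (n : ℕ) : aseq t n < aseq t (n + 1) := by
  rw [← Subtype.coe_lt_coe]
  have ht' : (0 : ℝ) < t := ht
  unfold aseq
  dsimp only
  push_cast
  apply mul_lt_mul_of_pos_left _ ht'
  rw [div_lt_div_iff₀ (by positivity) (by positivity)]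
  nlinarith [sq_nonneg ((n : ℝ))]

lemma aseq_tendsto (t : unitInterval) :
    Tendsto (fun n : ℕ => ((aseq t n : ℝ))) atTop (𝓝 (t : ℝ)) := by
  have h : ∀ n : ℕ, ((aseq t n : ℝ)) = (t : ℝ) - (t : ℝ) * (1 / ((n : ℝ) + 2)) := by
    intro n
    show (t : ℝ) * (((n : ℝ) + 1) / ((n : ℝ) + 2)) = _
    field_simp
    ring
  simp only [h]
  have h3 : Tendsto (fun n : ℕ => (t : ℝ) - (t : ℝ) * (1 / ((n : ℝ) + 2))) atTop
      (𝓝 ((t : ℝ) - (t : ℝ) * 0)) := Filter.Tendsto.sub tendsto_const_nhds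
    (aux_tendsto.const_mul _)
  simpa using h3

def bseq (t : unitInterval) (n : ℕ) : unitInterval :=
  ⟨(t : ℝ) + (1 - (t : ℝ)) * (1 / ((n : ℝ) + 2)), by
    have h1 : (0 : ℝ) ≤ 1 - (t : ℝ) := by linarith [t.2.2]
    constructor
    · have h0 : (0:ℝ) ≤ (1 - (t : ℝ)) * (1 / ((n : ℝ) + 2)) :=
        mul_nonneg h1 (by positivity)
      linarith [t.2.1]
    · have h2 : (1 - (t : ℝ)) * (1 / ((n : ℝ) + 2)) ≤ (1 - (t : ℝ)) * 1 := by
        apply mul_le_mul_of_nonneg_left _ h1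
        rw [div_le_one (by positivity)]; linarith
      linarith⟩

lemma bseq_gt {t : unitInterval} (ht : t < 1) (n : ℕ) : t < bseq t n := by
  rw [← Subtype.coe_lt_coe]
  have ht' : (t : ℝ) < 1 := ht
  show (t : ℝ) < (t : ℝ) + (1 - (t : ℝ)) * (1 / ((n : ℝ) + 2))
  have h0 : (0:ℝ) < (1 - (t : ℝ)) * (1 / ((n : ℝ) + 2)) :=
    mul_pos (by linarith) (by positivity)
  linarith

lemma bseq_anti {t : unitInterval} (ht : t < 1) (n : ℕ) : bseq t (n + 1) < bseq t n := by
  rw [← Subtype.coe_lt_coe]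
  have ht' : (t : ℝ) < 1 := ht
  unfold bseq
  dsimp only
  push_cast
  have h1 : (0:ℝ) < 1 - (t : ℝ) := by linarith
  have h2 : (1 : ℝ) / ((n : ℝ) + 1 + 2) < 1 / ((n : ℝ) + 2) := by
    apply one_div_lt_one_div_of_lt (by positivity); linarith
  nlinarith

lemma bseq_tendsto (t : unitInterval) :
    Tendsto (fun n : ℕ => ((bseq t n : ℝ))) atTop (𝓝 (t : ℝ)) := by
  have h3 : Tendsto (fun n : ℕ => (t : ℝ) + (1 - (t : ℝ)) * (1 / ((n : ℝ) + 2))) atTop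
      (𝓝 ((t : ℝ) + (1 - (t : ℝ)) * 0)) := Filter.Tendsto.add tendsto_const_nhds
    (aux_tendsto.const_mul _)
  have heq : ∀ n : ℕ, ((bseq t n : ℝ)) = (t : ℝ) + (1 - (t : ℝ)) * (1 / ((n : ℝ) + 2)) :=
    fun n => rfl
  simp only [heq]
  simpa using h3


/-- For every ordinal `α`, `X_α` meets every `L_t` (`t ∈ (0,1]`) and every `R_t`
(`t ∈ [0,1)`). -/
theorem Xseq_meets_Lset_Rset (u : StoneCech ℕ)
    (hu : ∀ n : ℕ, u ≠ stoneCechUnit n)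
    (hne : (Su u).Nonempty) (hcomp : IsCompact (Su u)) (hconn : IsConnected (Su u))
    (hFsp : IsFSpace (Su u))
    (hP : ∀ s r : unitInterval, s < r → IsConnected (Pset u s r)) :
    ∀ α : Ordinal,
      (∀ t : unitInterval, 0 < t → (Xseq u α ∩ Lset u t).Nonempty) ∧
      (∀ t : unitInterval, t < 1 → (Xseq u α ∩ Rset u t).Nonempty) := by
  haveI : CompactSpace (Su u) := isCompact_iff_compactSpace.mp hcomp
  intro α
  induction α using Ordinal.limitRecOn with
  | zero =>
      rw [Xseq_zero]
      constructor
      · intro t ht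
        have hsel : ∀ n : ℕ, ∃ x : Su u, x ∈ Pset u (aseq t n) (aseq t (n + 1)) :=
          fun n => (hP _ _ (aseq_mono ht n)).nonempty
        choose x hx using hsel
        have hxs : ∀ n, fu u (x n) ∈ Set.Ico (0 : unitInterval) t := by
          intro n
          exact ⟨unitInterval.nonneg', (fu_mem_Icc (hx n)).2.trans_lt (aseq_lt ht (n + 1))⟩
        have hlim : Tendsto (fun n => fu u (x n)) atTop (𝓝 t) := by
          rw [tendsto_subtype_rng]
          refine tendsto_of_tendsto_of_tendsto_of_le_of_le (aseq_tendsto t)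
            ((aseq_tendsto t).comp (Filter.tendsto_add_atTop_nat 1)) ?_ ?_
          · exact fun n => Subtype.coe_le_coe.mpr (fu_mem_Icc (hx n)).1
          · exact fun n => Subtype.coe_le_coe.mpr (fu_mem_Icc (hx n)).2
        obtain ⟨z, -, hfz, hcl, -⟩ := key u isClosed_univ
          (fun y hy => ne_of_lt hy.2) (fun n => Set.mem_univ (x n)) hxs hlim
        exact ⟨z, Set.mem_univ z, hfz, hcl⟩
      · intro t ht
        have hsel : ∀ n : ℕ, ∃ x : Su u, x ∈ Pset u (bseq t (n + 1)) (bseq t n) :=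
          fun n => (hP _ _ (bseq_anti ht n)).nonempty
        choose x hx using hsel
        have hxs : ∀ n, fu u (x n) ∈ Set.Ioc t 1 := by
          intro n
          exact ⟨(bseq_gt ht (n + 1)).trans_le (fu_mem_Icc (hx n)).1, unitInterval.le_one'⟩
        have hlim : Tendsto (fun n => fu u (x n)) atTop (𝓝 t) := by
          rw [tendsto_subtype_rng]
          refine tendsto_of_tendsto_of_tendsto_of_le_of_le
            ((bseq_tendsto t).comp (Filter.tendsto_add_atTop_nat 1)) (bseq_tendsto t) ?_ ?_
          · exact fun n => Subtype.coe_le_coe.mpr (fu_mem_Icc (hx n)).1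
          · exact fun n => Subtype.coe_le_coe.mpr (fu_mem_Icc (hx n)).2
        obtain ⟨z, -, hfz, hcl, -⟩ := key u isClosed_univ
          (fun y hy => ne_of_gt hy.1) (fun n => Set.mem_univ (x n)) hxs hlim
        exact ⟨z, Set.mem_univ z, hfz, hcl⟩
  | add_one α ih =>
      obtain ⟨ihL, ihR⟩ := ih
      constructor
      · intro t ht
        have hsel : ∀ n : ℕ, ∃ x, x ∈ Xseq u α ∩ Rset u (aseq t n) :=
          fun n => ihR (aseq t n) ((aseq_lt ht n).trans_le unitInterval.le_one')
        choose x hx using hsel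
        have hfux : ∀ n, fu u (x n) = aseq t n := fun n => (hx n).2.1
        have hxs : ∀ n, fu u (x n) ∈ Set.Ico (0 : unitInterval) t := by
          intro n
          rw [hfux n]
          exact ⟨unitInterval.nonneg', aseq_lt ht n⟩
        have hlim : Tendsto (fun n => fu u (x n)) atTop (𝓝 t) := by
          have heq : (fun n => fu u (x n)) = fun n => aseq t n := funext hfux
          rw [heq, tendsto_subtype_rng]
          exact aseq_tendsto t
        obtain ⟨z, hzA, hfz, hcl, hni⟩ := key u (isClosed_Xseq u α)
          (fun y hy => ne_of_lt hy.2) (fun n => (hx n).1) hxs hlim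
        rw [Xseq_succ]
        have hL : z ∈ Lset u t := ⟨Set.mem_singleton_iff.mpr hfz, hcl⟩
        refine ⟨z, ⟨hzA, ?_⟩, hL⟩
        simp only [Set.mem_iUnion, not_exists]
        exact fun r => hni r
      · intro t ht
        have hsel : ∀ n : ℕ, ∃ x, x ∈ Xseq u α ∩ Lset u (bseq t n) :=
          fun n => ihL (bseq t n) (lt_of_le_of_lt unitInterval.nonneg' (bseq_gt ht n))
        choose x hx using hsel
        have hfux : ∀ n, fu u (x n) = bseq t n := fun n => (hx n).2.1
        have hxs : ∀ n, fu u (x n) ∈ Set.Ioc t 1 := by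
          intro n
          rw [hfux n]
          exact ⟨bseq_gt ht n, unitInterval.le_one'⟩
        have hlim : Tendsto (fun n => fu u (x n)) atTop (𝓝 t) := by
          have heq : (fun n => fu u (x n)) = fun n => bseq t n := funext hfux
          rw [heq, tendsto_subtype_rng]
          exact bseq_tendsto t
        obtain ⟨z, hzA, hfz, hcl, hni⟩ := key u (isClosed_Xseq u α)
          (fun y hy => ne_of_gt hy.1) (fun n => (hx n).1) hxs hlim
        rw [Xseq_succ]
        have hR : z ∈ Rset u t := ⟨Set.mem_singleton_iff.mpr hfz, hcl⟩
        refine ⟨z, ⟨hzA, ?_⟩, hR⟩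
        simp only [Set.mem_iUnion, not_exists]
        exact fun r => hni r
  | limit o ho ih =>
      haveI : Nonempty {β : Ordinal // β < o} := ⟨⟨0, ho.pos⟩⟩
      constructor
      · intro t ht
        rw [Xseq_limit u ho, Set.iInter_inter]
        apply IsCompact.nonempty_iInter_of_directed_nonempty_isCompact_isClosed
        · intro i j
          rcases le_total i.1 j.1 with h | h
          · exact ⟨j, Set.inter_subset_inter_left _ (Xseq_anti u h), subset_rfl⟩
          · exact ⟨i, subset_rfl, Set.inter_subset_inter_left _ (Xseq_anti u h)⟩
        · exact fun β => (ih β.1 β.2).1 t ht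
        · exact fun β => ((isClosed_Xseq u β.1).inter (isClosed_Lset u t)).isCompact
        · exact fun β => (isClosed_Xseq u β.1).inter (isClosed_Lset u t)
      · intro t ht
        rw [Xseq_limit u ho, Set.iInter_inter]
        apply IsCompact.nonempty_iInter_of_directed_nonempty_isCompact_isClosed
        · intro i j
          rcases le_total i.1 j.1 with h | h
          · exact ⟨j, Set.inter_subset_inter_left _ (Xseq_anti u h), subset_rfl⟩
          · exact ⟨i, subset_rfl, Set.inter_subset_inter_left _ (Xseq_anti u h)⟩
        · exact fun β => (ih β.1 β.2).2 t ht
        · exact fun β => ((isClosed_Xseq u β.1).inter (isClosed_Rset u t)).isCompact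
        · exact fun β => (isClosed_Xseq u β.1).inter (isClosed_Rset u t)

end
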